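/- Let T be a profinite topological space and let {Y_j}_{j ∈ J} be a filtered diagram of sets. Then the canonical map colim_j LC(T, Y_j) → LC(T, colim_j Y_j), induced by postcomposition with the structure maps Y_j → colim_j Y_j, is a bijection, where each set Y is regarded with the discrete topology. -/

import Mathlib

open CategoryTheory CategoryTheory.Limits

universe u

/-- The functor `LC(T, -)` sending a set `Y` (with the discrete topology) to the
locally constant functions `T → Y`, and a map to postcomposition. -/
def lcFunctor (T : Type u) [TopologicalSpace T] {J : Type u} [SmallCategory J]
    (F : J ⥤ Type u) : J ⥤ Type u where
  obj j := LocallyConstant T (F.obj j)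
  map f := TypeCat.ofHom (LocallyConstant.map (F.map f))
  map_id j := by
    ext g x
    simp
  map_comp f g := by
    ext h x
    simp

/-- The cocone on `LC(T, F(-))` with vertex `LC(T, colim F)` whose legs are given
by postcomposition with the structure maps `F(j) → colim F`; its induced map
out of `colim_j LC(T, F(j))` is the canonical map of the statement. -/
noncomputable def lcCocone (T : Type u) [TopologicalSpace T] {J : Type u} [SmallCategory J]
    (F : J ⥤ Type u) : Cocone (lcFunctor T F) where
  pt := LocallyConstant T (colimit F)
  ι :=
    { app := fun j => TypeCat.ofHom (LocallyConstant.map (colimit.ι F j))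
      naturality := fun i j f => by
        ext g
        apply LocallyConstant.ext
        intro x
        exact colimit.w_apply F f _ }

lemma aux_isLC_codRestrict {T : Type u} [TopologicalSpace T] {Y : Type u}
    {g : T → Y} (hg : IsLocallyConstant g) (R : Set Y) (hR : ∀ t, g t ∈ R) :
    IsLocallyConstant (fun t => (⟨g t, hR t⟩ : R)) := by
  intro s
  have : (fun t => (⟨g t, hR t⟩ : R)) ⁻¹' s = g ⁻¹' (Subtype.val '' s) := by
    ext t
    constructor
    · intro ht
      exact ⟨⟨g t, hR t⟩, ht, rfl⟩
    · rintro ⟨u, hu, hut⟩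
      have : (⟨g t, hR t⟩ : R) = u := Subtype.ext hut.symm
      rw [Set.mem_preimage, this]
      exact hu
  rw [this]
  exact hg _

/-- For a profinite space `T` and a filtered diagram of sets `{Y_j}`, the
canonical map `colim_j LC(T, Y_j) → LC(T, colim_j Y_j)` is a bijection. -/
theorem lc_colimit_bijective (T : Type u) [TopologicalSpace T] [CompactSpace T]
    [T2Space T] [TotallyDisconnectedSpace T]
    {J : Type u} [SmallCategory J] [IsFiltered J] (F : J ⥤ Type u) :
    Function.Bijective (colimit.desc (lcFunctor T F) (lcCocone T F)) := by
  classical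
  constructor
  · -- injectivity
    intro a b hab
    obtain ⟨i, gi0, rfl⟩ := Types.jointly_surjective' a
    obtain ⟨j, gj0, rfl⟩ := Types.jointly_surjective' b
    let gi : LocallyConstant T (F.obj i) := gi0
    let gj : LocallyConstant T (F.obj j) := gj0
    show colimit.ι (lcFunctor T F) i gi = colimit.ι (lcFunctor T F) j gj
    have hab' : LocallyConstant.map (colimit.ι F i) gi
        = LocallyConstant.map (colimit.ι F j) gj := by
      have h1 := ConcreteCategory.congr_hom (colimit.ι_desc (lcCocone T F) i) gi0
      have h2 := ConcreteCategory.congr_hom (colimit.ι_desc (lcCocone T F) j) gj0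
      exact (h1.symm.trans hab).trans h2
    have hpt : ∀ t : T, colimit.ι F i (gi t) = colimit.ι F j (gj t) := fun t =>
      congrFun (congrArg (fun (f : LocallyConstant T (colimit F)) => (f : T → colimit F)) hab') t
    -- finite set of value pairs
    set R : Set (F.obj i × F.obj j) := Set.range (fun t => (gi t, gj t)) with hRdef
    have hR : R.Finite := Set.Finite.subset ((gi.range_finite).prod (gj.range_finite))
      (by rintro p ⟨t, rfl⟩; exact ⟨⟨t, rfl⟩, ⟨t, rfl⟩⟩)
    haveI : Fintype R := hR.fintype
    have key : ∀ p : R, ∃ (k : J) (f : i ⟶ k) (g : j ⟶ k),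
        F.map f p.1.1 = F.map g p.1.2 := by
      rintro ⟨p, t, rfl⟩
      exact (Types.FilteredColimit.colimit_eq_iff F).mp (hpt t)
    choose k f g hk using key
    set O : Finset J := insert i (insert j (Finset.univ.image k)) with hO
    have mi : i ∈ O := by simp [hO]
    have mj : j ∈ O := by simp [hO]
    have mk : ∀ p : R, k p ∈ O := fun p => by simp [hO]
    set H : Finset (Σ' (X Y : J) (_ : X ∈ O) (_ : Y ∈ O), X ⟶ Y) :=
      (Finset.univ.image fun p : R => ⟨i, k p, mi, mk p, f p⟩) ∪
      (Finset.univ.image fun p : R => ⟨j, k p, mj, mk p, g p⟩) with hH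
    obtain ⟨S, Tm, w⟩ := IsFiltered.sup_exists O H
    have hfmem : ∀ p : R, (⟨i, k p, mi, mk p, f p⟩ :
        Σ' (X Y : J) (_ : X ∈ O) (_ : Y ∈ O), X ⟶ Y) ∈ H := fun p => by
      simp only [hH, Finset.mem_union, Finset.mem_image]
      exact Or.inl ⟨p, Finset.mem_univ p, rfl⟩
    have hgmem : ∀ p : R, (⟨j, k p, mj, mk p, g p⟩ :
        Σ' (X Y : J) (_ : X ∈ O) (_ : Y ∈ O), X ⟶ Y) ∈ H := fun p => by
      simp only [hH, Finset.mem_union, Finset.mem_image]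
      exact Or.inr ⟨p, Finset.mem_univ p, rfl⟩
    have claim : ∀ t : T, F.map (Tm mi) (gi t) = F.map (Tm mj) (gj t) := by
      intro t
      set p : R := ⟨(gi t, gj t), ⟨t, rfl⟩⟩ with hp
      have e1 : f p ≫ Tm (mk p) = Tm mi := w mi (mk p) (hfmem p)
      have e2 : g p ≫ Tm (mk p) = Tm mj := w mj (mk p) (hgmem p)
      calc F.map (Tm mi) (gi t) = F.map (f p ≫ Tm (mk p)) (gi t) := by rw [e1]
        _ = F.map (Tm (mk p)) (F.map (f p) (gi t)) := by
            rw [FunctorToTypes.map_comp_apply]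
        _ = F.map (Tm (mk p)) (F.map (g p) (gj t)) := by rw [hk p]
        _ = F.map (g p ≫ Tm (mk p)) (gj t) := by rw [FunctorToTypes.map_comp_apply]
        _ = F.map (Tm mj) (gj t) := by rw [e2]
    have hmap : (lcFunctor T F).map (Tm mi) gi = (lcFunctor T F).map (Tm mj) gj := by
      apply LocallyConstant.ext
      intro t
      exact claim t
    calc colimit.ι (lcFunctor T F) i gi
        = colimit.ι (lcFunctor T F) S ((lcFunctor T F).map (Tm mi) gi) :=
          (ConcreteCategory.congr_hom (colimit.w (lcFunctor T F) (Tm mi)) gi).symm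
      _ = colimit.ι (lcFunctor T F) S ((lcFunctor T F).map (Tm mj) gj) := by rw [hmap]
      _ = colimit.ι (lcFunctor T F) j gj :=
          ConcreteCategory.congr_hom (colimit.w (lcFunctor T F) (Tm mj)) gj
  · -- surjectivity
    intro g0
    let g : LocallyConstant T (colimit F) := g0
    show ∃ a, colimit.desc (lcFunctor T F) (lcCocone T F) a = g
    choose jy xy hxy using fun y : colimit F => Types.jointly_surjective' (F := F) y
    have hR : (Set.range (g : T → colimit F)).Finite := g.range_finite
    haveI : Fintype (Set.range (g : T → colimit F)) := hR.fintype
    set R := Set.range (g : T → colimit F) with hRdef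
    set O : Finset J := Finset.univ.image (fun y : R => jy y.1) with hO
    obtain ⟨S, TS⟩ := IsFiltered.sup_objs_exists O
    have mm : ∀ y : R, jy y.1 ∈ O := fun y => by simp [hO]
    let τ : ∀ y : R, (jy y.1 ⟶ S) := fun y => (TS (mm y)).some
    let ψ : R → F.obj S := fun y => F.map (τ y) (xy y.1)
    have hmem : ∀ t : T, g t ∈ R := fun t => ⟨t, rfl⟩
    let g' : T → R := fun t => ⟨g t, hmem t⟩
    have hg' : IsLocallyConstant g' := aux_isLC_codRestrict g.isLocallyConstant R hmem
    let ℓ : LocallyConstant T (F.obj S) := ⟨ψ ∘ g', hg'.comp ψ⟩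
    refine ⟨colimit.ι (lcFunctor T F) S ℓ, ?_⟩
    have h1 : colimit.desc (lcFunctor T F) (lcCocone T F) (colimit.ι (lcFunctor T F) S ℓ)
        = (lcCocone T F).ι.app S ℓ := ConcreteCategory.congr_hom (colimit.ι_desc (lcCocone T F) S) ℓ
    rw [h1]
    apply LocallyConstant.ext
    intro t
    show colimit.ι F S (F.map (τ (g' t)) (xy (g t))) = g t
    have := ConcreteCategory.congr_hom (colimit.w F (τ (g' t))) (xy (g t))
    calc colimit.ι F S (F.map (τ (g' t)) (xy (g t)))
        = colimit.ι F (jy (g t)) (xy (g t)) := this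
      _ = g t := hxy (g t)
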